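/- Let d ≥ 1 be an integer, N ≥ 3 an odd integer, and T ≥ 1 a real number. Let T be a full binary tree with N nodes whose internal nodes have depths h_1, …, h_m with m = (N−1)/2. If N − 1 ≤ T and T ≥ ∑_{i=1}^{m} ( −1 + 2^{2h_i/d}/(2d) ), then N ≤ 1 + 8·(dT)^{d/(d+2)}. -/

import Mathlib

open Finset Real

/-- A full binary tree: every node has either exactly two children or none. -/
inductive FullBinaryTree : Type
  | leaf : FullBinaryTree
  | node : FullBinaryTree → FullBinaryTree → FullBinaryTree

namespace FullBinaryTree

/-- Total number of nodes. -/
def numNodes : FullBinaryTree → ℕ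
  | leaf => 1
  | node l r => 1 + l.numNodes + r.numNodes

/-- Number of internal nodes (nodes with two children) at depth `h`
(the depth of a node is its distance to the root). -/
def internalCount : FullBinaryTree → ℕ → ℕ
  | leaf, _ => 0
  | node _ _, 0 => 1
  | node l r, h + 1 => l.internalCount h + r.internalCount h

lemma one_le_numNodes : ∀ t : FullBinaryTree, 1 ≤ t.numNodes
  | leaf => le_refl 1
  | node l r => by simp [numNodes]; omega

lemma internalCount_le : ∀ (t : FullBinaryTree) (h : ℕ), t.internalCount h ≤ 2 ^ h
  | leaf, h => by simp [internalCount]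
  | node l r, 0 => by simp [internalCount]
  | node l r, h + 1 => by
      have hl := internalCount_le l h
      have hr := internalCount_le r h
      simp only [internalCount, pow_succ]
      omega

lemma internalCount_eq_zero : ∀ (t : FullBinaryTree) (h : ℕ),
    t.numNodes ≤ h → t.internalCount h = 0
  | leaf, _, _ => rfl
  | node l r, 0, hh => by
      have := one_le_numNodes l
      simp [numNodes] at hh
  | node l r, h + 1, hh => by
      have hl := one_le_numNodes l
      have hr := one_le_numNodes r
      simp only [numNodes] at hh
      simp only [internalCount]
      rw [internalCount_eq_zero l h (by omega), internalCount_eq_zero r h (by omega)]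

lemma sum_internalCount : ∀ (t : FullBinaryTree) (n : ℕ), t.numNodes ≤ n →
    2 * ∑ h ∈ range n, t.internalCount h + 1 = t.numNodes
  | leaf, n, _ => by simp [internalCount, numNodes]
  | node l r, 0, hn => by simp [numNodes] at hn
  | node l r, n + 1, hn => by
      have hl := one_le_numNodes l
      have hr := one_le_numNodes r
      simp only [numNodes] at hn
      have Hl := sum_internalCount l n (by omega)
      have Hr := sum_internalCount r n (by omega)
      rw [Finset.sum_range_succ']
      simp only [internalCount, Finset.sum_add_distrib, numNodes]
      omega

end FullBinaryTree

lemma geom_two (n : ℕ) : ∑ h ∈ range n, 2 ^ h = 2 ^ n - 1 := by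
  induction n with
  | zero => simp
  | succ k ihk =>
    have : (1:ℕ) ≤ 2 ^ k := Nat.one_le_two_pow
    rw [Finset.sum_range_succ, ihk]
    ring_nf
    omega

lemma exp_ineq {β : ℝ} (hβ0 : 0 ≤ β) (hβ2 : β ≤ 2) : 3 * (1 + β) ≤ 4 * (2 : ℝ) ^ β := by
  have h2 : (2:ℝ) ^ β = Real.exp (Real.log 2 * β) := by
    rw [Real.rpow_def_of_pos (by norm_num)]
  have he := Real.add_one_le_exp (Real.log 2 * β)
  have hlog : (0.6931471803 : ℝ) < Real.log 2 := Real.log_two_gt_d9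
  nlinarith

lemma sum_rpow_lower {β : ℝ} (hβ : 0 ≤ β) :
    ∀ m : ℕ, (m : ℝ) ^ (1 + β) / (1 + β) ≤ ∑ i ∈ range m, ((i : ℝ) + 1) ^ β := by
  intro m
  induction m with
  | zero => simp [Real.zero_rpow (by positivity : (1:ℝ) + β ≠ 0)]
  | succ m ih =>
    rw [Finset.sum_range_succ]
    have hp : (1:ℝ) ≤ 1 + β := by linarith
    have hm1 : (0:ℝ) < (m:ℝ) + 1 := by positivity
    have hber := one_add_mul_self_le_rpow_one_add
      (by rw [neg_le, neg_neg]; rw [div_le_one hm1]; linarith : (-1:ℝ) ≤ -(1 / ((m:ℝ)+1))) hp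
    have hx : (1:ℝ) + -(1 / ((m:ℝ)+1)) = (m:ℝ) / ((m:ℝ)+1) := by field_simp; ring
    rw [hx] at hber
    have hmul : ((m:ℝ) / ((m:ℝ)+1)) ^ (1+β) * ((m:ℝ)+1) ^ (1+β) = (m:ℝ) ^ (1+β) := by
      rw [← Real.mul_rpow (by positivity) (by positivity), div_mul_cancel₀]
      exact ne_of_gt hm1
    have hsplit : ((m:ℝ)+1) ^ (1+β) = ((m:ℝ)+1) ^ β * ((m:ℝ)+1) := by
      rw [add_comm (1:ℝ) β, Real.rpow_add_one (ne_of_gt hm1)]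
    have hpow_pos : (0:ℝ) < ((m:ℝ)+1) ^ (1+β) := Real.rpow_pos_of_pos hm1 _
    have key : ((m:ℝ)+1) ^ (1+β) ≤ (m:ℝ) ^ (1+β) + (1+β) * ((m:ℝ)+1) ^ β := by
      have h := mul_le_mul_of_nonneg_right hber (le_of_lt hpow_pos)
      rw [hmul] at h
      have hdiv : (1 / ((m:ℝ)+1)) * (((m:ℝ)+1) ^ (1+β)) = ((m:ℝ)+1) ^ β := by
        rw [hsplit]; field_simp
      nlinarith [h, hdiv]
    have h1β : (0:ℝ) < 1 + β := by linarith
    rw [div_le_iff₀ h1β] at ih ⊢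
    push_cast
    calc ((m:ℝ)+1) ^ (1+β) ≤ (m:ℝ) ^ (1+β) + (1+β) * ((m:ℝ)+1) ^ β := key
      _ ≤ (∑ i ∈ range m, ((i:ℝ)+1) ^ β) * (1+β) + (1+β) * ((m:ℝ)+1) ^ β := by linarith
      _ = (∑ i ∈ range m, ((i:ℝ)+1) ^ β + ((m:ℝ)+1) ^ β) * (1+β) := by ring

lemma key_sum_le {β : ℝ} (hβ : 0 ≤ β) (c : ℕ → ℕ) (hc : ∀ h, c h ≤ 2 ^ h) (n : ℕ) :
    ∑ i ∈ range (∑ h ∈ range n, c h), (((i : ℝ) + 1) / 2) ^ β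
      ≤ ∑ h ∈ range n, (c h : ℝ) * (2 : ℝ) ^ (β * (h : ℝ)) := by
  induction n with
  | zero => simp
  | succ n ih =>
    rw [Finset.sum_range_succ (f := c), Finset.sum_range_succ
      (f := fun h => (c h : ℝ) * (2 : ℝ) ^ (β * (h : ℝ)))]
    set M := ∑ h ∈ range n, c h with hM
    have hMle : M + 1 ≤ 2 ^ n := by
      have h1 : M ≤ ∑ h ∈ range n, 2 ^ h := Finset.sum_le_sum fun h _ => hc h
      have h2 := geom_two n
      have : (1:ℕ) ≤ 2 ^ n := Nat.one_le_two_pow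
      omega
    rw [← Finset.sum_range_add_sum_Ico _ (Nat.le_add_right M (c n))]
    have hbound : ∀ i ∈ Finset.Ico M (M + c n),
        (((i : ℝ) + 1) / 2) ^ β ≤ (2 : ℝ) ^ (β * (n : ℝ)) := by
      intro i hi
      rw [Finset.mem_Ico] at hi
      have hin : (i : ℝ) + 1 ≤ 2 * 2 ^ n := by
        have : i + 1 ≤ 2 * 2 ^ n := by
          have := hc n
          omega
        exact_mod_cast this
      have h1 : (((i : ℝ) + 1) / 2) ≤ (2 : ℝ) ^ n := by
        rw [div_le_iff₀ (by norm_num : (0:ℝ) < 2)]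
        calc ((i:ℝ) + 1) ≤ 2 * 2 ^ n := hin
          _ = 2 ^ n * 2 := by ring
      calc (((i : ℝ) + 1) / 2) ^ β ≤ ((2:ℝ) ^ n) ^ β :=
            Real.rpow_le_rpow (by positivity) h1 hβ
        _ = (2 : ℝ) ^ (β * (n : ℝ)) := by
            rw [← Real.rpow_natCast 2 n, ← Real.rpow_mul (by norm_num), mul_comm]
    have hIco : ∑ i ∈ Finset.Ico M (M + c n), (((i : ℝ) + 1) / 2) ^ β
        ≤ (c n : ℝ) * (2 : ℝ) ^ (β * (n : ℝ)) := by
      calc ∑ i ∈ Finset.Ico M (M + c n), (((i : ℝ) + 1) / 2) ^ β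
          ≤ ∑ _i ∈ Finset.Ico M (M + c n), (2 : ℝ) ^ (β * (n : ℝ)) :=
            Finset.sum_le_sum hbound
        _ = (c n : ℝ) * (2 : ℝ) ^ (β * (n : ℝ)) := by
            rw [Finset.sum_const, Nat.card_Ico, nsmul_eq_mul]
            congr 2
            omega
    exact add_le_add ih hIco

/-- Combinatorial core of Lemma 3: if a full binary tree with `N` nodes (`N ≥ 3` odd)
satisfies `N - 1 ≤ T` and `∑_{internal nodes} (-1 + 2^{2h/d}/(2d)) ≤ T`, where the sum
runs over the internal nodes and `h` denotes their depths, then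
`N ≤ 1 + 8 (dT)^{d/(d+2)}`. -/
theorem stmt_8 (d : ℕ) (hd : 1 ≤ d) (N : ℕ) (hN : 3 ≤ N) (hodd : Odd N)
    (T : ℝ) (hT : 1 ≤ T)
    (t : FullBinaryTree) (ht : t.numNodes = N)
    (h1 : (N : ℝ) - 1 ≤ T)
    (h2 : ∑' h : ℕ, (t.internalCount h : ℝ) *
        (-1 + (2 : ℝ) ^ (2 * (h : ℝ) / (d : ℝ)) / (2 * (d : ℝ))) ≤ T) :
    (N : ℝ) ≤ 1 + 8 * ((d : ℝ) * T) ^ ((d : ℝ) / ((d : ℝ) + 2)) := by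
  obtain ⟨m, hmN⟩ := hodd
  have hd0 : (1:ℝ) ≤ (d:ℝ) := by exact_mod_cast hd
  have hdpos : (0:ℝ) < (d:ℝ) := by linarith
  set β : ℝ := 2 / (d:ℝ) with hβdef
  have hβ0 : 0 < β := by positivity
  have hβ2 : β ≤ 2 := by
    rw [hβdef, div_le_iff₀ hdpos]; linarith
  set c : ℕ → ℕ := t.internalCount with hc
  -- sum of counts = m
  have hsum : ∑ h ∈ range N, c h = m := by
    have hs := FullBinaryTree.sum_internalCount t N (le_of_eq ht)
    rw [ht, ← hc] at hs
    omega
  -- tsum is a finite sum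
  have hfin : ∀ h ∉ range N, ((c h : ℝ) *
      (-1 + (2 : ℝ) ^ (2 * (h : ℝ) / (d : ℝ)) / (2 * (d : ℝ)))) = 0 := by
    intro h hh
    rw [Finset.mem_range, not_lt] at hh
    have : c h = 0 := FullBinaryTree.internalCount_eq_zero t h (by omega)
    rw [this]
    simp
  rw [tsum_eq_sum hfin] at h2
  set S : ℝ := ∑ h ∈ range N, (c h : ℝ) * (2 : ℝ) ^ (β * (h : ℝ)) with hS
  -- rewrite h2
  have hrw : ∑ h ∈ range N, ((c h : ℝ) *
      (-1 + (2 : ℝ) ^ (2 * (h : ℝ) / (d : ℝ)) / (2 * (d : ℝ))))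
      = -(m:ℝ) + S / (2 * (d:ℝ)) := by
    have : ∀ h ∈ range N, (c h : ℝ) *
        (-1 + (2 : ℝ) ^ (2 * (h : ℝ) / (d : ℝ)) / (2 * (d : ℝ)))
        = -(c h : ℝ) + ((c h : ℝ) * (2 : ℝ) ^ (β * (h : ℝ))) / (2 * (d:ℝ)) := by
      intro h _
      have he : 2 * (h : ℝ) / (d : ℝ) = β * (h : ℝ) := by
        rw [hβdef]; ring
      rw [he]; ring
    rw [Finset.sum_congr rfl this, Finset.sum_add_distrib, ← Finset.sum_div, ← hS,
      Finset.sum_neg_distrib]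
    congr 2
    rw [← Nat.cast_sum, hsum]
  rw [hrw] at h2
  have hSle : S ≤ 2 * (d:ℝ) * (T + m) := by
    have h2d : (0:ℝ) < 2 * (d:ℝ) := by linarith
    rw [neg_add_le_iff_le_add] at h2
    calc S = 2 * (d:ℝ) * (S / (2 * (d:ℝ))) := by field_simp
      _ ≤ 2 * (d:ℝ) * (T + m) := by
          apply mul_le_mul_of_nonneg_left _ (le_of_lt h2d)
          linarith
  -- m ≤ T / 2
  have hmT : (m:ℝ) ≤ T / 2 := by
    have : (N:ℝ) = 2 * m + 1 := by exact_mod_cast congrArg Nat.cast hmN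
    linarith
  have hSle3 : S ≤ 3 * (d:ℝ) * T := by
    calc S ≤ 2 * (d:ℝ) * (T + m) := hSle
      _ ≤ 2 * (d:ℝ) * (T + T / 2) := by
          apply mul_le_mul_of_nonneg_left _ (by linarith)
          linarith
      _ = 3 * (d:ℝ) * T := by ring
  -- lower bound for S
  have hlow : (m:ℝ) ^ (1 + β) / ((1 + β) * (2:ℝ) ^ β) ≤ S := by
    have hk := key_sum_le hβ0.le c (fun h => FullBinaryTree.internalCount_le t h) N
    rw [hsum] at hk
    have hdiv : ∀ i ∈ range m, (((i:ℝ) + 1) / 2) ^ β = ((i:ℝ) + 1) ^ β / (2:ℝ) ^ β := by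
      intro i _
      rw [Real.div_rpow (by positivity) (by norm_num)]
    rw [Finset.sum_congr rfl hdiv, ← Finset.sum_div] at hk
    have hsl := sum_rpow_lower hβ0.le m
    have h2β : (0:ℝ) < (2:ℝ) ^ β := Real.rpow_pos_of_pos (by norm_num) _
    rw [div_le_iff₀ h2β] at hk
    rw [div_le_iff₀ (by positivity : (0:ℝ) < (1 + β) * (2:ℝ) ^ β)]
    calc (m:ℝ) ^ (1 + β) ≤ (∑ i ∈ range m, ((i:ℝ) + 1) ^ β) * (1 + β) := by
          rw [div_le_iff₀ (by positivity : (0:ℝ) < 1 + β)] at hsl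
          exact hsl
      _ ≤ S * (2:ℝ) ^ β * (1 + β) := by
          apply mul_le_mul_of_nonneg_right hk (by positivity)
      _ = S * ((1 + β) * (2:ℝ) ^ β) := by ring
  -- combine: m^{1+β} ≤ 4^{1+β} d T
  have h2β : (0:ℝ) < (2:ℝ) ^ β := Real.rpow_pos_of_pos (by norm_num) _
  have hexp := exp_ineq hβ0.le hβ2
  have hmain : (m:ℝ) ^ (1 + β) ≤ (4:ℝ) ^ ((1:ℝ) + β) * ((d:ℝ) * T) := by
    have h4 : (4:ℝ) ^ ((1:ℝ) + β) = 4 * ((2:ℝ) ^ β * (2:ℝ) ^ β) := by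
      rw [Real.rpow_add (by norm_num : (0:ℝ) < 4), Real.rpow_one]
      congr 1
      rw [← Real.mul_rpow (by norm_num) (by norm_num)]
      norm_num
    have hstep : (m:ℝ) ^ (1 + β) ≤ (1 + β) * (2:ℝ) ^ β * (3 * (d:ℝ) * T) := by
      rw [div_le_iff₀ (by positivity : (0:ℝ) < (1 + β) * (2:ℝ) ^ β)] at hlow
      calc (m:ℝ) ^ (1 + β) ≤ S * ((1 + β) * (2:ℝ) ^ β) := hlow
        _ ≤ (3 * (d:ℝ) * T) * ((1 + β) * (2:ℝ) ^ β) := by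
            apply mul_le_mul_of_nonneg_right hSle3 (by positivity)
        _ = (1 + β) * (2:ℝ) ^ β * (3 * (d:ℝ) * T) := by ring
    rw [h4]
    have hdT : (0:ℝ) < (d:ℝ) * T := by nlinarith
    nlinarith [hstep, mul_pos hdT h2β, h2β]
  -- extract m ≤ 4 (dT)^{d/(d+2)}
  set α : ℝ := (d:ℝ) / ((d:ℝ) + 2) with hα
  have hαpos : 0 < α := by positivity
  have hpα : (1 + β) * α = 1 := by
    rw [hβdef, hα]; field_simp
  have hdT1 : (1:ℝ) ≤ (d:ℝ) * T := by nlinarith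
  have hm4 : (m:ℝ) ≤ 4 * ((d:ℝ) * T) ^ α := by
    have hmono := Real.rpow_le_rpow (by positivity : (0:ℝ) ≤ (m:ℝ) ^ (1 + β))
      hmain hαpos.le
    rw [← Real.rpow_mul (Nat.cast_nonneg m), hpα, Real.rpow_one,
      Real.mul_rpow (by positivity) (by positivity),
      ← Real.rpow_mul (by norm_num : (0:ℝ) ≤ 4), hpα, Real.rpow_one] at hmono
    exact hmono
  have hNm : (N:ℝ) = 2 * (m:ℝ) + 1 := by exact_mod_cast congrArg Nat.cast hmN
  rw [hNm]
  linarith
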